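/- arXiv:2202.05978 — 2 statements merged into one kernel-verified Lean document; each statement's English description precedes it below -/
import Mathlib

section
/- Let a, b > 0 and M ≥ 0 be real constants, T > 0, and let ρ : [0,T] → ℝ be continuous with 0 ≤ ρ(s) ≤ M² for all s ∈ [0,T]. If u : [0,T] → ℝ is differentiable with u(0) = 0 and u'(t) = b·e^{−2u(t)}·ρ(t) − a for all t, then for every t ∈ [0,T]: e^{−2u(t)} ≤ e^{2at} and e^{−2u(t)} ≥ 1/(1 + (b/a)·M²). In particular, e^{2u(t)} ≥ e^{−2at}. -/
/-- Key computation in Lemma 8.1: if the energy density is bounded by `M²` on `[0,T]`,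
then `e^{-2u(t)} ≤ e^{2at}` and `e^{-2u(t)} ≥ 1/(1 + (b/a) M²)`, so in particular
`e^{2u(t)} ≥ e^{-2at}`. -/
theorem uniform_parabolicity (a b M T : ℝ) (ha : 0 < a) (hb : 0 < b) (hM : 0 ≤ M)
    (hT : 0 < T)
    (ρ : ℝ → ℝ) (hρc : ContinuousOn ρ (Set.Icc 0 T))
    (hρ : ∀ s ∈ Set.Icc (0:ℝ) T, 0 ≤ ρ s ∧ ρ s ≤ M ^ 2)
    (u : ℝ → ℝ) (hu0 : u 0 = 0)
    (hu : ∀ t ∈ Set.Icc (0:ℝ) T, HasDerivAt u (b * Real.exp (-2 * u t) * ρ t - a) t) :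
    ∀ t ∈ Set.Icc (0:ℝ) T,
      Real.exp (-2 * u t) ≤ Real.exp (2 * a * t)
      ∧ 1 / (1 + (b / a) * M ^ 2) ≤ Real.exp (-2 * u t)
      ∧ Real.exp (-2 * a * t) ≤ Real.exp (2 * u t) := by
  set w : ℝ → ℝ := fun t => Real.exp (2 * u t + 2 * a * t) with hw_def
  have hw : ∀ t ∈ Set.Icc (0:ℝ) T,
      HasDerivAt w (2 * b * ρ t * Real.exp (2 * a * t)) t := by
    intro t ht
    have h1 : HasDerivAt (fun s => 2 * u s + 2 * a * s)
        (2 * (b * Real.exp (-2 * u t) * ρ t - a) + 2 * a * 1) t :=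
      ((hu t ht).const_mul 2).add ((hasDerivAt_id t).const_mul (2 * a))
    have h2 := h1.exp
    convert h2 using 1
    have e1 : Real.exp (2 * u t + 2 * a * t)
        = Real.exp (2 * u t) * Real.exp (2 * a * t) := Real.exp_add _ _
    have e2 : Real.exp (-2 * u t) = (Real.exp (2 * u t))⁻¹ := by
      rw [show (-2 : ℝ) * u t = -(2 * u t) by ring, Real.exp_neg]
    rw [e1, e2]
    field_simp
    ring
  have hwc : ContinuousOn w (Set.Icc 0 T) :=
    fun t ht => (hw t ht).continuousAt.continuousWithinAt
  have hint : interior (Set.Icc (0:ℝ) T) ⊆ Set.Icc 0 T := interior_subset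
  -- w is monotone
  have hmono : MonotoneOn w (Set.Icc 0 T) := by
    refine monotoneOn_of_hasDerivWithinAt_nonneg (f' := fun t => 2 * b * ρ t * Real.exp (2 * a * t))
      (convex_Icc 0 T) hwc (fun x hx => (hw x (hint hx)).hasDerivWithinAt) ?_
    intro x hx
    have h0 := (hρ x (hint hx)).1
    positivity
  have hw0 : w 0 = 1 := by simp [hw_def, hu0]
  -- g antitone
  set g : ℝ → ℝ := fun t => w t - (1 + (b / a) * M ^ 2 * (Real.exp (2 * a * t) - 1)) with hg_def
  have hganti : AntitoneOn g (Set.Icc 0 T) := by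
    refine antitoneOn_of_hasDerivWithinAt_nonpos
      (f' := fun t => 2 * b * ρ t * Real.exp (2 * a * t)
        - b / a * M ^ 2 * (2 * a * Real.exp (2 * a * t)))
      (convex_Icc 0 T) ?_ ?_ ?_
    · exact hwc.sub (by fun_prop)
    · intro x hx
      have h1 : HasDerivAt (fun s => 1 + (b / a) * M ^ 2 * (Real.exp (2 * a * s) - 1))
          (b / a * M ^ 2 * (2 * a * Real.exp (2 * a * x))) x := by
        have : HasDerivAt (fun s : ℝ => Real.exp (2 * a * s)) (2 * a * Real.exp (2 * a * x)) x := by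
          have := ((hasDerivAt_id x).const_mul (2 * a)).exp
          simpa [mul_comm] using this
        exact (((this.sub_const 1).const_mul ((b / a) * M ^ 2))).const_add 1
      exact ((hw x (hint hx)).sub h1).hasDerivWithinAt
    · intro x hx
      have h2 := (hρ x (hint hx)).2
      have hpos : (0:ℝ) < Real.exp (2 * a * x) := Real.exp_pos _
      have : b / a * M ^ 2 * (2 * a * Real.exp (2 * a * x))
          = 2 * b * M ^ 2 * Real.exp (2 * a * x) := by field_simp
      show 2 * b * ρ x * Real.exp (2 * a * x)
        - b / a * M ^ 2 * (2 * a * Real.exp (2 * a * x)) ≤ 0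
      rw [this]
      nlinarith [mul_nonneg (mul_nonneg hb.le (sub_nonneg.mpr h2)) hpos.le]
  have hg0 : g 0 = 0 := by simp [hg_def, hw0]
  intro t ht
  have h0T : (0:ℝ) ∈ Set.Icc (0:ℝ) T := ⟨le_refl 0, le_of_lt hT⟩
  have hwt : 1 ≤ w t := hw0 ▸ hmono h0T ht ht.1
  have hle : 0 ≤ 2 * u t + 2 * a * t := by
    by_contra h
    push_neg at h
    have := Real.exp_lt_one_iff.mpr h
    simp only [hw_def] at hwt
    linarith
  have hgt : g t ≤ 0 := hg0 ▸ hganti h0T ht ht.1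
  have hwub : w t ≤ 1 + (b / a) * M ^ 2 * (Real.exp (2 * a * t) - 1) := by
    simp only [hg_def] at hgt; linarith
  have hcpos : (0:ℝ) < 1 + (b / a) * M ^ 2 := by positivity
  have hexp1 : (1:ℝ) ≤ Real.exp (2 * a * t) :=
    Real.one_le_exp (by nlinarith [ht.1] : (0:ℝ) ≤ 2 * a * t)
  have hbam : 0 ≤ (b / a) * M ^ 2 := by positivity
  have hwub2 : w t ≤ (1 + (b / a) * M ^ 2) * Real.exp (2 * a * t) := by nlinarith
  have hu_ub : Real.exp (2 * u t) ≤ 1 + (b / a) * M ^ 2 := by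
    have : w t = Real.exp (2 * u t) * Real.exp (2 * a * t) := by
      simp [hw_def, Real.exp_add]
    rw [this] at hwub2
    have hpos : (0:ℝ) < Real.exp (2 * a * t) := Real.exp_pos _
    exact le_of_mul_le_mul_right hwub2 hpos |>.trans_eq rfl
  refine ⟨?_, ?_, ?_⟩
  · apply Real.exp_le_exp.mpr; linarith
  · have e2 : Real.exp (-2 * u t) = 1 / Real.exp (2 * u t) := by
      rw [show (-2 : ℝ) * u t = -(2 * u t) by ring, Real.exp_neg, one_div]
    rw [e2]
    exact one_div_le_one_div_of_le (Real.exp_pos _) hu_ub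
  · apply Real.exp_le_exp.mpr; linarith
end

section
/- Let a, b > 0 be real constants, p > 2, and let ρ : [0,∞) → ℝ be a continuous nonnegative function. If u : [0,∞) → ℝ is differentiable with u'(t) = b·e^{−2u(t)}·ρ(t) − a for all t ≥ 0, then for all 0 ≤ t₀ ≤ t one has e^{p·u(t)} ≤ e^{p·u(t₀)} + 2b·(b(p−2)/(pa))^{(p−2)/2}·∫_{t₀}^{t} ρ(s)^{p/2} ds. -/
/-- Pointwise Young-type inequality:
`p b r y^{(p-2)/2} - p a y^{p/2} ≤ 2b (b(p-2)/(pa))^{(p-2)/2} r^{p/2}`. -/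
lemma young_key (a b p : ℝ) (ha : 0 < a) (hb : 0 < b) (hp : 2 < p)
    (r y : ℝ) (hr : 0 ≤ r) (hy : 0 < y) :
    p * b * r * y ^ ((p - 2) / 2) - p * a * y ^ (p / 2)
      ≤ 2 * b * (b * (p - 2) / (p * a)) ^ ((p - 2) / 2) * r ^ (p / 2) := by
  have hp0 : (0:ℝ) < p := by linarith
  have hp2 : (0:ℝ) < p - 2 := by linarith
  have hK : (0:ℝ) < b * (p - 2) / (p * a) := by positivity
  set θ : ℝ := (p - 2) / p with hθdef
  have hθ0 : 0 < θ := by positivity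
  have hθ1 : 1 - θ = 2 / p := by rw [hθdef]; field_simp; ring
  set A : ℝ := p ^ 2 * a / (p - 2) * y ^ (p / 2) with hAdef
  set B : ℝ := p * b * (b * (p - 2) / (p * a)) ^ ((p - 2) / 2) * r ^ (p / 2) with hBdef
  have hA : 0 ≤ A := by positivity
  have hB : 0 ≤ B := by positivity
  have hpne : p ≠ 0 := ne_of_gt hp0
  have hgm := Real.geom_mean_le_arith_mean2_weighted (w₁ := θ) (w₂ := 1 - θ)
    hθ0.le (by rw [hθ1]; positivity) hA hB (by ring)
  have e1 : A ^ θ = (p ^ 2 * a / (p - 2)) ^ θ * y ^ ((p - 2) / 2) := by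
    rw [hAdef, Real.mul_rpow (by positivity) (by positivity), ← Real.rpow_mul hy.le,
      show p / 2 * θ = (p - 2) / 2 by rw [hθdef]; field_simp]
  have e2 : B ^ (1 - θ) = (p * b) ^ (1 - θ) * (b * (p - 2) / (p * a)) ^ θ * r := by
    rw [hBdef, Real.mul_rpow (by positivity) (Real.rpow_nonneg hr _),
      Real.mul_rpow (by positivity) (by positivity),
      ← Real.rpow_mul hK.le, ← Real.rpow_mul hr]
    have h1 : (p - 2) / 2 * (1 - θ) = θ := by rw [hθ1, hθdef]; field_simp; try ring
    have h2 : p / 2 * (1 - θ) = 1 := by rw [hθ1]; field_simp; try ring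
    rw [h1, h2, Real.rpow_one]
  have hpow : A ^ θ * B ^ (1 - θ) = p * b * r * y ^ ((p - 2) / 2) := by
    rw [e1, e2]
    have e3 : (p ^ 2 * a / (p - 2)) ^ θ * (b * (p - 2) / (p * a)) ^ θ = (p * b) ^ θ := by
      rw [← Real.mul_rpow (by positivity) hK.le]
      congr 1
      field_simp; try ring
    have e4 : (p * b) ^ θ * (p * b) ^ (1 - θ) = p * b := by
      rw [← Real.rpow_add (by positivity), add_sub_cancel, Real.rpow_one]
    calc (p ^ 2 * a / (p - 2)) ^ θ * y ^ ((p - 2) / 2) *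
          ((p * b) ^ (1 - θ) * (b * (p - 2) / (p * a)) ^ θ * r)
        = (p ^ 2 * a / (p - 2)) ^ θ * (b * (p - 2) / (p * a)) ^ θ * (p * b) ^ (1 - θ) *
            (r * y ^ ((p - 2) / 2)) := by ring
      _ = (p * b) ^ θ * (p * b) ^ (1 - θ) * (r * y ^ ((p - 2) / 2)) := by rw [e3]
      _ = p * b * (r * y ^ ((p - 2) / 2)) := by rw [e4]
      _ = p * b * r * y ^ ((p - 2) / 2) := by ring
  have h1 : θ * A = p * a * y ^ (p / 2) := by
    rw [hAdef, hθdef]; field_simp; try ring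
  have h2 : (1 - θ) * B = 2 * b * (b * (p - 2) / (p * a)) ^ ((p - 2) / 2) * r ^ (p / 2) := by
    rw [hθ1, hBdef]; field_simp; try ring
  rw [hpow, h1, h2] at hgm
  linarith

/-- Integrated form of Lemma 7.1:
`e^{p u(t)} ≤ e^{p u(t₀)} + 2b (b(p-2)/(pa))^{(p-2)/2} ∫_{t₀}^{t} ρ(s)^{p/2} ds`. -/
theorem exp_pu_integral_bound (a b p : ℝ) (ha : 0 < a) (hb : 0 < b) (hp : 2 < p)
    (ρ : ℝ → ℝ) (hρc : ContinuousOn ρ (Set.Ici 0))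
    (hρ0 : ∀ t ≥ (0:ℝ), 0 ≤ ρ t)
    (u : ℝ → ℝ)
    (hu : ∀ t ≥ (0:ℝ), HasDerivAt u (b * Real.exp (-2 * u t) * ρ t - a) t) :
    ∀ t₀ t : ℝ, 0 ≤ t₀ → t₀ ≤ t →
      Real.exp (p * u t)
        ≤ Real.exp (p * u t₀)
            + 2 * b * (b * (p - 2) / (p * a)) ^ ((p - 2) / 2)
                * ∫ s in t₀..t, ρ s ^ (p / 2) := by
  intro t₀ t ht₀ ht
  set C : ℝ := 2 * b * (b * (p - 2) / (p * a)) ^ ((p - 2) / 2) with hC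
  have hIcc : Set.Icc t₀ t ⊆ Set.Ici (0:ℝ) := fun s hs => le_trans ht₀ hs.1
  have hucont : ContinuousOn u (Set.Icc t₀ t) :=
    fun s hs => ((hu s (hIcc hs)).continuousAt).continuousWithinAt
  have hρ' : ContinuousOn ρ (Set.Icc t₀ t) := hρc.mono hIcc
  set G : ℝ → ℝ := fun s =>
    Real.exp (p * u s) * (p * (b * Real.exp (-2 * u s) * ρ s - a)) with hG
  have hderiv : ∀ s ∈ Set.Icc t₀ t,
      HasDerivAt (fun τ => Real.exp (p * u τ)) (G s) s := by
    intro s hs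
    have h1 := (hu s (hIcc hs)).const_mul p
    exact (Real.hasDerivAt_exp (p * u s)).comp s h1
  have hGcont : ContinuousOn G (Set.Icc t₀ t) := by
    apply ContinuousOn.mul
    · exact Real.continuous_exp.comp_continuousOn (continuousOn_const.mul hucont)
    · exact continuousOn_const.mul
        (((continuousOn_const.mul
          (Real.continuous_exp.comp_continuousOn (continuousOn_const.mul hucont))).mul
            hρ').sub continuousOn_const)
  have hgcont : ContinuousOn (fun s => C * ρ s ^ (p / 2)) (Set.Icc t₀ t) :=
    continuousOn_const.mul (hρ'.rpow_const fun s _ => Or.inr (by positivity))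
  have hint1 : IntervalIntegrable G MeasureTheory.volume t₀ t :=
    hGcont.intervalIntegrable_of_Icc ht
  have hint2 : IntervalIntegrable (fun s => C * ρ s ^ (p / 2)) MeasureTheory.volume t₀ t :=
    hgcont.intervalIntegrable_of_Icc ht
  have hFTC : ∫ s in t₀..t, G s = Real.exp (p * u t) - Real.exp (p * u t₀) :=
    intervalIntegral.integral_eq_sub_of_hasDerivAt
      (fun s hs => hderiv s (by rwa [Set.uIcc_of_le ht] at hs)) hint1
  have hptwise : ∀ s ∈ Set.Icc t₀ t, G s ≤ C * ρ s ^ (p / 2) := by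
    intro s hs
    have hs0 : (0:ℝ) ≤ s := hIcc hs
    have key := young_key a b p ha hb hp (ρ s) (Real.exp (2 * u s))
      (hρ0 s hs0) (Real.exp_pos _)
    have e1 : Real.exp (2 * u s) ^ ((p - 2) / 2)
        = Real.exp (-2 * u s) * Real.exp (p * u s) := by
      rw [← Real.exp_mul, ← Real.exp_add]; congr 1; ring
    have e2 : Real.exp (2 * u s) ^ (p / 2) = Real.exp (p * u s) := by
      rw [← Real.exp_mul]; congr 1; ring
    rw [e1, e2] at key
    have : G s = p * b * ρ s * (Real.exp (-2 * u s) * Real.exp (p * u s))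
        - p * a * Real.exp (p * u s) := by rw [hG]; ring
    rw [this]
    exact key
  have hmono : ∫ s in t₀..t, G s ≤ ∫ s in t₀..t, C * ρ s ^ (p / 2) :=
    intervalIntegral.integral_mono_on ht hint1 hint2 hptwise
  rw [hFTC, intervalIntegral.integral_const_mul] at hmono
  linarith
end
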